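/- Fix integers q ≥ 2 and n ≥ 1, the alphabet A = {0,1,…,q−1}, and a code C ⊆ A^n with #C ≥ 2 and minimum Hamming distance d. Let ℓ be an integer with 0 ≤ ℓ < d, let S ⊆ {1,…,n} with #S = n − ℓ, and let t : S → ℝ. Then the set Λ_C ∩ { x ∈ ℝ^n : x_i = t_i for all i ∈ S } is finite; in particular its Hausdorff dimension is 0. -/

import Mathlib

open scoped ENNReal

/-- The code fractal `Λ_C ⊆ [0,1]^n ⊆ ℝ^n`: points whose coordinates admit a joint
`q`-ary expansion whose digit vectors form an infinite sequence of codewords of `C`. -/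
def Lambda (q n : ℕ) (C : Set (Fin n → Fin q)) : Set (EuclideanSpace ℝ (Fin n)) :=
  {x | ∃ c : ℕ → (Fin n → Fin q), (∀ j, c j ∈ C) ∧
    ∀ i : Fin n, x i = ∑' j : ℕ, (c j i : ℝ) / (q : ℝ) ^ (j + 1)}

-- auxiliary lemmas
section aux
variable {q : ℕ}

lemma summable_div_pow (hq : 2 ≤ q) (c : ℕ → ℝ) (B : ℝ) (hc : ∀ j, |c j| ≤ B) (m : ℕ) :
    Summable (fun j : ℕ => c j / (q : ℝ) ^ (j + m)) := by
  have hq2 : (2:ℝ) ≤ (q:ℝ) := by exact_mod_cast hq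
  have hq0 : (0:ℝ) < q := by linarith
  have hr : (1:ℝ)/q < 1 := by rw [div_lt_one hq0]; linarith
  have hr0 : (0:ℝ) ≤ 1/q := by positivity
  have hg : Summable (fun j : ℕ => (B / (q:ℝ) ^ m) * (1/(q:ℝ)) ^ j) :=
    (summable_geometric_of_lt_one hr0 hr).mul_left _
  refine Summable.of_abs (Summable.of_nonneg_of_le (fun j => abs_nonneg _) (fun j => ?_) hg)
  rw [abs_div, abs_of_nonneg (by positivity : (0:ℝ) ≤ (q:ℝ)^(j+m))]
  have h1 : (0:ℝ) < (q:ℝ)^j := by positivity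
  have h2 : (0:ℝ) < (q:ℝ)^m := by positivity
  calc |c j| / (q:ℝ)^(j+m) ≤ B / (q:ℝ)^(j+m) := by gcongr; exact hc j
    _ = B / (q:ℝ)^m * (1/(q:ℝ))^j := by
        rw [pow_add, div_pow, one_pow, div_mul_div_comm, mul_one, mul_comm ((q:ℝ)^m)]

lemma tail_geom (hq : 2 ≤ q) (m : ℕ) :
    ∑' k : ℕ, ((q:ℝ) - 1) / (q : ℝ) ^ (k + m + 1) = 1 / (q:ℝ) ^ m := by
  have hq2 : (2:ℝ) ≤ (q:ℝ) := by exact_mod_cast hq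
  have hq0 : (0:ℝ) < q := by linarith
  have hr : (1:ℝ)/q < 1 := by rw [div_lt_one hq0]; linarith
  have hr0 : (0:ℝ) ≤ 1/q := by positivity
  have h1 : ∀ k : ℕ, ((q:ℝ) - 1) / (q : ℝ) ^ (k + m + 1)
      = (((q:ℝ) - 1) / (q:ℝ)^(m+1)) * (1/(q:ℝ))^k := by
    intro k
    have h1 : (0:ℝ) < (q:ℝ)^k := by positivity
    have h2 : (0:ℝ) < (q:ℝ)^(m+1) := by positivity
    rw [show k + m + 1 = k + (m+1) by ring, pow_add, div_pow, one_pow,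
      div_mul_div_comm, mul_one, mul_comm ((q:ℝ)^(m+1))]
  rw [tsum_congr h1, tsum_mul_left, tsum_geometric_of_lt_one hr0 hr]
  have h4 : (1:ℝ) - 1/q = ((q:ℝ)-1)/q := by field_simp
  have h5 : (q:ℝ) - 1 ≠ 0 := by linarith
  have h6 : (q:ℝ) ^ (m+1) ≠ 0 := by positivity
  have h7 : (q:ℝ) ^ m ≠ 0 := by positivity
  rw [h4, inv_div, div_mul_div_comm, div_eq_div_iff (by positivity) h7]
  ring
end aux

set_option maxHeartbeats 1000000 in
lemma pair_lemma (hq : 2 ≤ q) (a b : ℕ → Fin q)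
    (hab : ∑' j : ℕ, (a j : ℝ) / (q:ℝ) ^ (j+1) = ∑' j : ℕ, (b j : ℝ) / (q:ℝ) ^ (j+1))
    (j0 : ℕ) (hlt : (a j0 : ℕ) < (b j0 : ℕ)) (hpre : ∀ j < j0, a j = b j) :
    ∀ j, j0 < j → (a j : ℕ) = q - 1 ∧ (b j : ℕ) = 0 := by
  have hq2 : (2:ℝ) ≤ (q:ℝ) := by exact_mod_cast hq
  have hbound : ∀ (x : Fin q), |(x : ℝ)| ≤ (q:ℝ) := by
    intro x
    rw [abs_of_nonneg (by positivity)]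
    exact_mod_cast (x.isLt).le
  have hub : ∀ (x : Fin q), (x : ℝ) ≤ (q:ℝ) - 1 := by
    intro x
    have : (x : ℕ) + 1 ≤ q := x.isLt
    have : ((x:ℕ) : ℝ) + 1 ≤ (q:ℝ) := by exact_mod_cast this
    linarith
  have Sa : Summable (fun j : ℕ => (a j : ℝ) / (q:ℝ) ^ (j+1)) :=
    summable_div_pow hq _ _ (fun j => hbound (a j)) 1
  have Sb : Summable (fun j : ℕ => (b j : ℝ) / (q:ℝ) ^ (j+1)) :=
    summable_div_pow hq _ _ (fun j => hbound (b j)) 1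
  have Sa' : Summable (fun k : ℕ => (a (k + (j0+1)) : ℝ) / (q:ℝ) ^ (k + (j0+1) + 1)) :=
    (summable_nat_add_iff (f := fun j : ℕ => (a j : ℝ) / (q:ℝ) ^ (j+1)) (j0+1)).2 Sa
  have Sb' : Summable (fun k : ℕ => (b (k + (j0+1)) : ℝ) / (q:ℝ) ^ (k + (j0+1) + 1)) :=
    (summable_nat_add_iff (f := fun j : ℕ => (b j : ℝ) / (q:ℝ) ^ (j+1)) (j0+1)).2 Sb
  have ha' := Summable.sum_add_tsum_nat_add (f := fun j : ℕ => (a j : ℝ) / (q:ℝ) ^ (j+1)) (j0+1) Sa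
  have hb' := Summable.sum_add_tsum_nat_add (f := fun j : ℕ => (b j : ℝ) / (q:ℝ) ^ (j+1)) (j0+1) Sb
  have hpref : ∑ i ∈ Finset.range j0, (a i : ℝ) / (q:ℝ) ^ (i+1)
      = ∑ i ∈ Finset.range j0, (b i : ℝ) / (q:ℝ) ^ (i+1) := by
    refine Finset.sum_congr rfl (fun i hi => ?_)
    rw [hpre i (Finset.mem_range.mp hi)]
  set Ta := ∑' k : ℕ, (a (k + (j0+1)) : ℝ) / (q:ℝ) ^ (k + (j0+1) + 1) with hTa
  set Tb := ∑' k : ℕ, (b (k + (j0+1)) : ℝ) / (q:ℝ) ^ (k + (j0+1) + 1) with hTb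
  have key : Ta - Tb = ((b j0 : ℝ) - (a j0 : ℝ)) / (q:ℝ) ^ (j0+1) := by
    have h := hab
    rw [← ha', ← hb', Finset.sum_range_succ, Finset.sum_range_succ, hpref] at h
    rw [sub_div]
    linarith
  have hge : (1:ℝ) / (q:ℝ)^(j0+1) ≤ ((b j0 : ℝ) - (a j0 : ℝ)) / (q:ℝ) ^ (j0+1) := by
    have h1 : (a j0 : ℕ) + 1 ≤ (b j0 : ℕ) := hlt
    have h2 : ((a j0 : ℕ) : ℝ) + 1 ≤ ((b j0 : ℕ) : ℝ) := by exact_mod_cast h1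
    gcongr
    linarith
  have S1 : Summable (fun k : ℕ => ((q:ℝ)-1) / (q:ℝ)^(k+(j0+1)+1)) := by
    have := summable_div_pow hq (fun _ => (q:ℝ)-1) ((q:ℝ))
      (fun j => by show |(q:ℝ)-1| ≤ (q:ℝ); rw [abs_of_nonneg (by linarith)]; linarith) (j0+2)
    simpa [show ∀ k:ℕ, k+(j0+2) = k+(j0+1)+1 from fun k => by omega] using this
  set u : ℕ → ℝ := fun k => ((q:ℝ)-1) / (q:ℝ)^(k+(j0+1)+1)
    - ((a (k + (j0+1)) : ℝ) / (q:ℝ) ^ (k + (j0+1) + 1)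
       - (b (k + (j0+1)) : ℝ) / (q:ℝ) ^ (k + (j0+1) + 1)) with hu
  have hu0 : ∀ k, 0 ≤ u k := by
    intro k
    have e1 : u k = ((q:ℝ)-1 - ((a (k + (j0+1)) : ℝ) - (b (k + (j0+1)) : ℝ)))
        / (q:ℝ)^(k+(j0+1)+1) := by
      simp only [hu]
      rw [div_sub_div_same, div_sub_div_same]
    rw [e1]
    apply div_nonneg _ (by positivity)
    have := hub (a (k + (j0+1)))
    have hb0 : (0:ℝ) ≤ (b (k + (j0+1)) : ℝ) := by positivity
    linarith
  have Su : Summable u := S1.sub (Sa'.sub Sb')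
  have hsumu : ∑' k, u k = 1 / (q:ℝ)^(j0+1) - (Ta - Tb) := by
    simp only [hu]
    rw [Summable.tsum_sub S1 (Sa'.sub Sb'), Summable.tsum_sub Sa' Sb', tail_geom hq (j0+1), ← hTa, ← hTb]
  have hle0 : ∑' k, u k ≤ 0 := by
    rw [hsumu, key]
    linarith
  have hzero : ∀ k, u k = 0 := by
    intro k
    have h1 : u k ≤ ∑' j, u j := Summable.le_tsum Su k (fun j _ => hu0 j)
    have := hu0 k
    linarith
  intro j hj
  obtain ⟨k, rfl⟩ : ∃ k, j = k + (j0+1) := ⟨j - (j0+1), by omega⟩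
  have h := hzero k
  have e1 : ((q:ℝ)-1 - ((a (k + (j0+1)) : ℝ) - (b (k + (j0+1)) : ℝ)))
      / (q:ℝ)^(k+(j0+1)+1) = 0 := by
    rw [← h]
    simp only [hu]
    rw [div_sub_div_same, div_sub_div_same]
  have hqpow : (0:ℝ) < (q:ℝ)^(k+(j0+1)+1) := by positivity
  have e2 : (q:ℝ)-1 - ((a (k + (j0+1)) : ℝ) - (b (k + (j0+1)) : ℝ)) = 0 := by
    by_contra hne
    exact hne (by field_simp at e1; linarith [e1])
  have hau := hub (a (k + (j0+1)))
  have hb0 : (0:ℝ) ≤ (b (k + (j0+1)) : ℝ) := by positivity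
  have ha_eq : (a (k + (j0+1)) : ℝ) = (q:ℝ) - 1 := by linarith
  have hb_eq : (b (k + (j0+1)) : ℝ) = 0 := by linarith
  constructor
  · have h1 : ((a (k + (j0+1)) : ℕ) : ℝ) = ((q - 1 : ℕ) : ℝ) := by
      rw [ha_eq]
      have : (1:ℕ) ≤ q := by omega
      push_cast [this]
      ring
    exact_mod_cast h1
  · exact_mod_cast hb_eq

lemma fiber_finite (hq : 2 ≤ q) (t : ℝ) :
    {a : ℕ → Fin q | ∑' j : ℕ, (a j : ℝ) / (q:ℝ) ^ (j+1) = t}.Finite := by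
  classical
  set T := {a : ℕ → Fin q | ∑' j : ℕ, (a j : ℝ) / (q:ℝ) ^ (j+1) = t} with hT
  set φ : (ℕ → Fin q) → Prop := fun a => ∃ N, ∀ j, N ≤ j → (a j : ℕ) = q - 1 with hφ
  have hinj : Set.InjOn φ T := by
    intro a ha b hb hab
    by_contra hne
    have hex : ∃ j, a j ≠ b j := by
      by_contra h
      push_neg at h
      exact hne (funext h)
    set j0 := Nat.find hex with hj0def
    have hj0 : a j0 ≠ b j0 := Nat.find_spec hex
    have hpre : ∀ j < j0, a j = b j := fun j hj =>
      not_not.mp (Nat.find_min hex hj)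
    have hsum : ∑' j : ℕ, (a j : ℝ) / (q:ℝ) ^ (j+1)
        = ∑' j : ℕ, (b j : ℝ) / (q:ℝ) ^ (j+1) := by
      rw [ha, hb]
    have hiff : φ a ↔ φ b := by rw [hab]
    rcases Nat.lt_trichotomy (a j0 : ℕ) (b j0 : ℕ) with h | h | h
    · have H := pair_lemma hq a b hsum j0 h hpre
      have hPa : φ a := ⟨j0 + 1, fun j hj => (H j (by omega)).1⟩
      obtain ⟨N, hN⟩ := hiff.mp hPa
      have h1 := hN (max N (j0+1)) (le_max_left _ _)
      have h2 := (H (max N (j0+1)) (by omega)).2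
      omega
    · exact hj0 (Fin.ext h)
    · have H := pair_lemma hq b a hsum.symm j0 h (fun j hj => (hpre j hj).symm)
      have hPb : φ b := ⟨j0 + 1, fun j hj => (H j (by omega)).1⟩
      obtain ⟨N, hN⟩ := hiff.mpr hPb
      have h1 := hN (max N (j0+1)) (le_max_left _ _)
      have h2 := (H (max N (j0+1)) (by omega)).2
      omega
  exact Set.Finite.of_finite_image (Set.toFinite _) hinj

open Classical in
noncomputable def recode {q n : ℕ} (hq0 : 0 < q) (C : Set (Fin n → Fin q))
    (S : Finset (Fin n)) (v : ↥S → Fin q) : Fin n → Fin q :=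
  if hv : ∃ u, u ∈ C ∧ ∀ i : ↥S, u i = v i then hv.choose else fun _ => ⟨0, hq0⟩

lemma recode_eq {q n : ℕ} (hq0 : 0 < q) (C : Set (Fin n → Fin q)) (S : Finset (Fin n))
    (hinj : ∀ x ∈ C, ∀ y ∈ C, (∀ i : ↥S, x i = y i) → x = y)
    (u : Fin n → Fin q) (hu : u ∈ C) :
    recode hq0 C S (fun i : ↥S => u i) = u := by
  have hv : ∃ w, w ∈ C ∧ ∀ i : ↥S, w i = u i := ⟨u, hu, fun _ => rfl⟩
  rw [recode, dif_pos hv]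
  exact hinj _ hv.choose_spec.1 _ hu hv.choose_spec.2

theorem stmt15 (q n : ℕ) (hq : 2 ≤ q) (hn : 1 ≤ n)
    (C : Set (Fin n → Fin q)) (hC : 2 ≤ C.ncard)
    (d : ℕ) (hd : d = sInf {k | ∃ x ∈ C, ∃ y ∈ C, x ≠ y ∧ hammingDist x y = k})
    (ℓ : ℕ) (hℓ : ℓ < d)
    (S : Finset (Fin n)) (hS : S.card = n - ℓ) (t : S → ℝ) :
    (Lambda q n C ∩ {x | ∀ i : S, x i = t i}).Finite ∧
    dimH (Lambda q n C ∩ {x | ∀ i : S, x i = t i}) = 0 := by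
  classical
  have hq0 : 0 < q := by omega
  have hd_le : ∀ x ∈ C, ∀ y ∈ C, x ≠ y → d ≤ hammingDist x y := by
    intro x hx y hy hxy
    rw [hd]
    exact Nat.sInf_le ⟨x, hx, y, hy, hxy, rfl⟩
  have hdn : d ≤ n := by
    obtain ⟨x, y, hx, hy, hxy⟩ := (Set.one_lt_ncard_iff (Set.toFinite C)).mp (by omega)
    have h1 := hd_le x hx y hy hxy
    have h2 : hammingDist x y ≤ n := by
      simpa using (hammingDist_le_card_fintype (x := x) (y := y))
    omega
  have hinjC : ∀ x ∈ C, ∀ y ∈ C, (∀ i : ↥S, x i = y i) → x = y := by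
    intro x hx y hy hagree
    by_contra hxy
    have h1 : d ≤ hammingDist x y := hd_le x hx y hy hxy
    have h2 : hammingDist x y ≤ Sᶜ.card := by
      apply Finset.card_le_card
      intro i hi
      rw [Finset.mem_filter] at hi
      rw [Finset.mem_compl]
      intro hiS
      exact hi.2 (hagree ⟨i, hiS⟩)
    have h3 : Sᶜ.card = n - S.card := by
      rw [Finset.card_compl, Fintype.card_fin]
    omega
  have hfin : (Lambda q n C ∩ {x | ∀ i : S, x i = t i}).Finite := by
    set g : (↥S → ℕ → Fin q) → EuclideanSpace ℝ (Fin n) :=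
      fun A => WithLp.toLp 2 (fun i => ∑' j : ℕ, ((recode hq0 C S (fun s => A s j)) i : ℝ) / (q:ℝ) ^ (j+1)) with hg
    set D : Set (↥S → ℕ → Fin q) :=
      {A | ∀ i : ↥S, A i ∈ {w : ℕ → Fin q | ∑' j : ℕ, (w j : ℝ) / (q:ℝ) ^ (j+1) = t i}} with hD
    have hDfin : D.Finite := Set.Finite.pi' (fun i => fiber_finite hq (t i))
    refine (hDfin.image g).subset ?_
    rintro x ⟨⟨c, hcC, hcsum⟩, hxt⟩
    refine ⟨fun i j => c j i, ?_, ?_⟩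
    · intro i
      show ∑' j : ℕ, (c j i : ℝ) / (q:ℝ) ^ (j+1) = t i
      rw [← hcsum i]
      exact hxt i
    · have hrec : ∀ j, recode hq0 C S (fun s : ↥S => c j s) = c j :=
        fun j => recode_eq hq0 C S hinjC (c j) (hcC j)
      ext i0
      show ∑' j : ℕ, ((recode hq0 C S (fun s => c j s)) i0 : ℝ) / (q:ℝ) ^ (j+1) = x i0
      simp only [hrec]
      exact (hcsum i0).symm
  exact ⟨hfin, hfin.dimH_zero⟩
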